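/- Fix a probability measure D on Z, an integer m ≥ 1, a prior probability measure P on H, λ > 0, and δ ∈ (0,1). With probability at least 1−δ over the draw of an i.i.d. sample S ~ D^⊗m, simultaneously for every probability measure Q on H, R_D(Q) ≤ R̂_S(Q) + (KL(Q‖P) + ln(1/δ)) / λ + λ / (8m) (Catoni-type PAC-Bayes bound for bounded losses). -/

import Mathlib

open MeasureTheory ENNReal

open Classical in
/-- Kullback–Leibler divergence between measures, `+∞` if `Q` is not absolutely
continuous with respect to `P` (or if the log-likelihood ratio is not integrable,
in which case the divergence between probability measures is indeed infinite). -/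
noncomputable def klDiv' {α : Type*} [MeasurableSpace α] (Q P : Measure α) : ℝ≥0∞ :=
  if Q ≪ P ∧ Integrable (fun x => Real.log (Q.rnDeriv P x).toReal) Q
  then ENNReal.ofReal (∫ x, Real.log (Q.rnDeriv P x).toReal ∂Q)
  else ∞

/-- Population risk of a hypothesis `h`. -/
noncomputable def riskD {H Z : Type*} [MeasurableSpace Z] (ℓ : H → Z → ℝ)
    (D : Measure Z) (h : H) : ℝ := ∫ z, ℓ h z ∂D

/-- Empirical risk of a hypothesis `h` on the sample `S`. -/
noncomputable def riskS {H Z : Type*} (ℓ : H → Z → ℝ) {m : ℕ} (S : Fin m → Z) (h : H) : ℝ :=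
  (1 / (m : ℝ)) * ∑ j, ℓ h (S j)

/-- Population risk of a distribution `Q` over hypotheses. -/
noncomputable def riskDQ {H Z : Type*} [MeasurableSpace H] [MeasurableSpace Z]
    (ℓ : H → Z → ℝ) (D : Measure Z) (Q : Measure H) : ℝ := ∫ h, riskD ℓ D h ∂Q

/-- Empirical risk of a distribution `Q` over hypotheses on the sample `S`. -/
noncomputable def riskSQ {H Z : Type*} [MeasurableSpace H] (ℓ : H → Z → ℝ) {m : ℕ}
    (S : Fin m → Z) (Q : Measure H) : ℝ := ∫ h, riskS ℓ S h ∂Q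

section PacBayesAux
open Real Set

lemma hoeff_denom_pos {p : ℝ} (hp0 : 0 ≤ p) (hp1 : p ≤ 1) (t : ℝ) :
    0 < 1 - p + p * Real.exp t := by
  rcases eq_or_lt_of_le hp0 with h | h
  · simp [← h]
  · have := Real.exp_pos t
    nlinarith

lemma hoeff_analytic {p : ℝ} (hp0 : 0 ≤ p) (hp1 : p ≤ 1) (t : ℝ) :
    1 - p + p * Real.exp t ≤ Real.exp (p * t + t ^ 2 / 8) := by
  set d : ℝ → ℝ := fun t => 1 - p + p * Real.exp t with hd
  have hdpos : ∀ t, 0 < d t := fun t => hoeff_denom_pos hp0 hp1 t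
  set g : ℝ → ℝ := fun t => p * t + t ^ 2 / 8 - Real.log (d t) with hg
  set g' : ℝ → ℝ := fun t => p + t / 4 - p * Real.exp t / d t with hg'
  have hdd : ∀ t, HasDerivAt d (p * Real.exp t) t := by
    intro t
    exact ((Real.hasDerivAt_exp t).const_mul p).const_add (1 - p)
  have hdg : ∀ t, HasDerivAt g (g' t) t := by
    intro t
    have h1 : HasDerivAt (fun t : ℝ => p * t + t ^ 2 / 8) (p + t / 4) t := by
      have := ((hasDerivAt_pow 2 t).div_const 8).const_add 0
      have h2 : HasDerivAt (fun t : ℝ => p * t) p t := by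
        simpa using (hasDerivAt_id t).const_mul p
      have h4 := h2.add ((hasDerivAt_pow 2 t).div_const 8)
      refine h4.congr_deriv ?_
      norm_num
      ring
    have h3 : HasDerivAt (fun t => Real.log (d t)) (p * Real.exp t / d t) t :=
      (hdd t).log (hdpos t).ne'
    exact h1.sub h3
  have hdg' : ∀ t, HasDerivAt g'
      (1 / 4 - p * Real.exp t * (1 - p) / (d t) ^ 2) t := by
    intro t
    have hq : HasDerivAt (fun t => p * Real.exp t / d t)
        ((p * Real.exp t * d t - p * Real.exp t * (p * Real.exp t)) / (d t) ^ 2) t :=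
      ((Real.hasDerivAt_exp t).const_mul p).div (hdd t) (hdpos t).ne'
    have h1 : HasDerivAt (fun t : ℝ => p + t / 4) (1 / 4) t := by
      simpa using ((hasDerivAt_id t).div_const 4).const_add p
    have := h1.sub hq
    refine this.congr_deriv ?_
    have : d t = 1 - p + p * Real.exp t := rfl
    field_simp
    ring
  have hg''nonneg : ∀ t, 0 ≤ 1 / 4 - p * Real.exp t * (1 - p) / (d t) ^ 2 := by
    intro t
    rw [sub_nonneg, div_le_iff₀ (pow_pos (hdpos t) 2)]
    have : d t = 1 - p + p * Real.exp t := rfl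
    nlinarith [sq_nonneg ((1 - p) - p * Real.exp t), Real.exp_pos t]
  have hg'mono : Monotone g' :=
    monotone_of_deriv_nonneg (fun t => (hdg' t).differentiableAt)
      (fun t => by rw [(hdg' t).deriv]; exact hg''nonneg t)
  have hg'0 : g' 0 = 0 := by
    have hd0 : d 0 = 1 := by simp [hd]
    simp [hg', hd0]
  have hg0 : g 0 = 0 := by
    have hd0 : d 0 = 1 := by simp [hd]
    simp [hg, hd0]
  have key : ∀ t, 0 ≤ g t := by
    intro t
    rcases le_total 0 t with h | h
    · have : MonotoneOn g (Ici 0) :=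
        monotoneOn_of_deriv_nonneg (convex_Ici 0)
          (fun x _ => (hdg x).differentiableAt.continuousAt.continuousWithinAt)
          (fun x _ => (hdg x).differentiableAt.differentiableWithinAt)
          (fun x hx => by
            rw [(hdg x).deriv]
            have : (0:ℝ) ≤ x := le_of_lt (by simpa using hx)
            calc (0:ℝ) = g' 0 := hg'0.symm
              _ ≤ g' x := hg'mono this)
      have := this (self_mem_Ici) (mem_Ici.2 h) h
      simpa [hg0] using this
    · have : AntitoneOn g (Iic 0) :=
        antitoneOn_of_deriv_nonpos (convex_Iic 0)
          (fun x _ => (hdg x).differentiableAt.continuousAt.continuousWithinAt)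
          (fun x _ => (hdg x).differentiableAt.differentiableWithinAt)
          (fun x hx => by
            rw [(hdg x).deriv]
            have hx0 : x ≤ 0 := le_of_lt (by simpa using hx)
            calc g' x ≤ g' 0 := hg'mono hx0
              _ = 0 := hg'0)
      have := this (mem_Iic.2 h) (self_mem_Iic) h
      simpa [hg0] using this
  have hlog : Real.log (d t) ≤ p * t + t ^ 2 / 8 := by
    have := key t
    simp only [hg] at this
    linarith
  calc d t = Real.exp (Real.log (d t)) := (Real.exp_log (hdpos t)).symm
    _ ≤ Real.exp (p * t + t ^ 2 / 8) := Real.exp_le_exp.2 hlog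

lemma integrable_of_bounded {α : Type*} [MeasurableSpace α] {μ : Measure α}
    [IsFiniteMeasure μ] {f : α → ℝ} (hf : AEStronglyMeasurable f μ) (C : ℝ)
    (hC : ∀ x, |f x| ≤ C) : Integrable f μ :=
  (integrable_const C).mono' hf (Filter.Eventually.of_forall hC)

lemma hoeffding_int {Z : Type*} [MeasurableSpace Z] (D : Measure Z)
    [IsProbabilityMeasure D] (X : Z → ℝ) (hX : Measurable X)
    (h01 : ∀ z, X z ∈ Set.Icc (0:ℝ) 1) (t : ℝ) :
    ∫ z, Real.exp (t * X z) ∂D ≤ Real.exp (t * (∫ z, X z ∂D) + t ^ 2 / 8) := by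
  have hXint : Integrable X D := integrable_of_bounded hX.aestronglyMeasurable 1
    (fun z => abs_le.2 ⟨by linarith [(h01 z).1], (h01 z).2⟩)
  set p : ℝ := ∫ z, X z ∂D with hp
  have hp0 : 0 ≤ p := integral_nonneg fun z => (h01 z).1
  have hp1 : p ≤ 1 := by
    calc p ≤ ∫ _, (1:ℝ) ∂D := integral_mono hXint (integrable_const 1) fun z => (h01 z).2
      _ = 1 := by simp
  have step : ∀ z, Real.exp (t * X z) ≤ 1 + (Real.exp t - 1) * X z := by
    intro z
    have hx0 := (h01 z).1
    have hx1 := (h01 z).2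
    have := convexOn_exp.2 (Set.mem_univ (0:ℝ)) (Set.mem_univ t)
      (by linarith : (0:ℝ) ≤ 1 - X z) hx0 (by ring)
    simp only [smul_eq_mul, mul_zero, zero_add] at this
    rw [mul_comm (X z) t] at this
    calc Real.exp (t * X z) ≤ (1 - X z) * Real.exp 0 + X z * Real.exp t := this
      _ = 1 + (Real.exp t - 1) * X z := by simp [Real.exp_zero]; ring
  have hexpint : Integrable (fun z => Real.exp (t * X z)) D := by
    refine integrable_of_bounded (((hX.const_mul t).exp).aestronglyMeasurable)
      (Real.exp |t|) fun z => ?_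
    rw [abs_of_pos (Real.exp_pos _)]
    apply Real.exp_le_exp.2
    calc t * X z ≤ |t * X z| := le_abs_self _
      _ = |t| * |X z| := abs_mul t (X z)
      _ ≤ |t| * 1 := by
          apply mul_le_mul_of_nonneg_left _ (abs_nonneg t)
          rw [abs_of_nonneg (h01 z).1]; exact (h01 z).2
      _ = |t| := mul_one _
  calc ∫ z, Real.exp (t * X z) ∂D
      ≤ ∫ z, (1 + (Real.exp t - 1) * X z) ∂D :=
        integral_mono hexpint ((integrable_const 1).add (hXint.const_mul _)) step
    _ = 1 - p + p * Real.exp t := by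
        rw [integral_add (integrable_const 1) (hXint.const_mul _), integral_const_mul]
        simp only [integral_const, measure_univ, ENNReal.toReal_one, probReal_univ, one_smul, smul_eq_mul, ← hp]
        ring
    _ ≤ Real.exp (p * t + t ^ 2 / 8) := hoeff_analytic hp0 hp1 t
    _ = Real.exp (t * p + t ^ 2 / 8) := by rw [mul_comm]

lemma integral_pi_prod_pow {Z : Type*} [MeasurableSpace Z] (D : Measure Z)
    [SigmaFinite D] (m : ℕ) (f : Z → ℝ) :
    ∫ S : Fin m → Z, ∏ j : Fin m, f (S j) ∂(Measure.pi fun _ : Fin m => D)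
      = (∫ z, f z ∂D) ^ m := by
  letI : MeasureSpace Z := ⟨D⟩
  have h1 : (Measure.pi fun _ : Fin m => D) = (volume : Measure (Fin m → Z)) := rfl
  rw [integral_fin_nat_prod_eq_prod (fun _ : Fin m => f)]
  have h2 : (volume : Measure Z) = D := rfl
  simp

lemma dv_easy {H : Type*} [MeasurableSpace H] (Q P : Measure H)
    [IsProbabilityMeasure Q] [IsProbabilityMeasure P]
    (hQP : Q ≪ P)
    (hint : Integrable (fun x => Real.log (Q.rnDeriv P x).toReal) Q)
    (f : H → ℝ) (hf : Measurable f) (C : ℝ) (hC : ∀ x, |f x| ≤ C) :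
    ∫ x, f x ∂Q ≤ (∫ x, Real.log (Q.rnDeriv P x).toReal ∂Q)
      + Real.log (∫ x, Real.exp (f x) ∂P) := by
  set ρ : H → ℝ := fun x => (Q.rnDeriv P x).toReal with hρ
  have hρmeas : Measurable ρ := (Measure.measurable_rnDeriv Q P).ennreal_toReal
  have hρpos : ∀ᵐ x ∂Q, 0 < ρ x := by
    filter_upwards [Measure.rnDeriv_pos hQP, hQP.ae_le (Measure.rnDeriv_lt_top Q P)]
      with x h1 h2
    exact ENNReal.toReal_pos h1.ne' h2.ne
  set u : H → ℝ := fun x => Real.exp (f x) / ρ x with hu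
  have humeas : Measurable u := (hf.exp).div hρmeas
  -- pointwise: ρ • u ≤ exp f, and ρ • u nonneg
  have hsmul_le : ∀ x, ρ x * u x ≤ Real.exp (f x) := by
    intro x
    rcases eq_or_ne (ρ x) 0 with h | h
    · simp [hu, h]; positivity
    · have : ρ x * u x = Real.exp (f x) := by
        rw [hu]
        field_simp
      rw [this]
  have hsmul_nonneg : ∀ x, 0 ≤ ρ x * u x := by
    intro x
    have : 0 ≤ ρ x := ENNReal.toReal_nonneg
    have : 0 ≤ u x := by positivity
    positivity
  have hbnd : ∀ x, Real.exp (f x) ≤ Real.exp C := fun x =>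
    Real.exp_le_exp.2 (le_trans (le_abs_self _) (hC x))
  have hexpint : Integrable (fun x => Real.exp (f x)) P :=
    integrable_of_bounded (hf.exp).aestronglyMeasurable (Real.exp C)
      (fun x => by rw [abs_of_pos (Real.exp_pos _)]; exact hbnd x)
  have hsmulint : Integrable (fun x => ρ x * u x) P :=
    integrable_of_bounded (hρmeas.mul humeas).aestronglyMeasurable (Real.exp C)
      (fun x => by
        rw [abs_of_nonneg (hsmul_nonneg x)]
        exact le_trans (hsmul_le x) (hbnd x))
  have hIu : Integrable u Q := by
    rw [← integrable_rnDeriv_smul_iff hQP]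
    simpa [smul_eq_mul] using hsmulint
  have hIf : Integrable f Q := integrable_of_bounded hf.aestronglyMeasurable C hC
  have hlogu_ae : ∀ᵐ x ∂Q, Real.log (u x) = f x - Real.log (ρ x) := by
    filter_upwards [hρpos] with x hx
    rw [hu]
    simp only
    rw [Real.log_div (Real.exp_ne_zero _) hx.ne', Real.log_exp]
  have hIlogu : Integrable (fun x => Real.log (u x)) Q :=
    (hIf.sub hint).congr (by filter_upwards [hlogu_ae] with x hx using hx.symm)
  have hupos : ∀ᵐ x ∂Q, 0 < u x := by
    filter_upwards [hρpos] with x hx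
    exact div_pos (Real.exp_pos _) hx
  have hexplogu : ∀ᵐ x ∂Q, Real.exp (Real.log (u x)) = u x := by
    filter_upwards [hupos] with x hx using Real.exp_log hx
  have hIexplogu : Integrable (fun x => Real.exp (Real.log (u x))) Q :=
    hIu.congr (by filter_upwards [hexplogu] with x hx using hx.symm)
  -- Jensen
  have jensen : Real.exp (∫ x, Real.log (u x) ∂Q) ≤ ∫ x, u x ∂Q := by
    have := convexOn_exp.map_integral_le Real.continuous_exp.continuousOn
      isClosed_univ (Filter.Eventually.of_forall fun x => Set.mem_univ _)
      hIlogu (by exact hIexplogu)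
    calc Real.exp (∫ x, Real.log (u x) ∂Q) ≤ ∫ x, Real.exp (Real.log (u x)) ∂Q := this
      _ = ∫ x, u x ∂Q := integral_congr_ae hexplogu
  have hchange : ∫ x, u x ∂Q = ∫ x, ρ x * u x ∂P := by
    rw [← integral_rnDeriv_smul hQP]
    simp [smul_eq_mul]
    rfl
  have hle : ∫ x, u x ∂Q ≤ ∫ x, Real.exp (f x) ∂P := by
    rw [hchange]
    exact integral_mono hsmulint hexpint hsmul_le
  have hsplit : ∫ x, Real.log (u x) ∂Q
      = ∫ x, f x ∂Q - ∫ x, Real.log (ρ x) ∂Q := by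
    rw [integral_congr_ae hlogu_ae, integral_sub hIf hint]
  have : Real.exp (∫ x, f x ∂Q - ∫ x, Real.log (ρ x) ∂Q)
      ≤ ∫ x, Real.exp (f x) ∂P := by
    rw [← hsplit]; exact le_trans jensen hle
  have := (Real.le_log_iff_exp_le (lt_of_lt_of_le (Real.exp_pos _) this)).2 this
  linarith

end PacBayesAux

/-- **Catoni-type PAC-Bayes bound** for bounded losses: with probability at least `1 − δ`
over `S ~ D^⊗m`, simultaneously for every posterior `Q`,
`R_D(Q) ≤ R̂_S(Q) + (KL(Q‖P) + ln(1/δ))/λ + λ/(8m)`. -/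
theorem catoni_pac_bayes_bound
    {H Z : Type*} [MeasurableSpace H] [MeasurableSpace Z]
    (ℓ : H → Z → ℝ) (hℓmeas : Measurable fun p : H × Z => ℓ p.1 p.2)
    (hℓbdd : ∀ h z, ℓ h z ∈ Set.Icc (0 : ℝ) 1)
    (D : Measure Z) [IsProbabilityMeasure D]
    (m : ℕ) (hm : 1 ≤ m)
    (P : Measure H) [IsProbabilityMeasure P]
    (lam : ℝ) (hlam : 0 < lam)
    (δ : ℝ) (hδ : δ ∈ Set.Ioo (0 : ℝ) 1) :
    ENNReal.ofReal (1 - δ) ≤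
      (Measure.pi fun _ : Fin m => D)
        {S | ∀ Q : Measure H, IsProbabilityMeasure Q →
          ENNReal.ofReal (riskDQ ℓ D Q) ≤
            ENNReal.ofReal (riskSQ ℓ S Q) +
              (klDiv' Q P + ENNReal.ofReal (Real.log (1 / δ))) / ENNReal.ofReal lam +
              ENNReal.ofReal (lam / (8 * m))} := by
  have hm0 : (0:ℝ) < (m:ℝ) := by exact_mod_cast Nat.lt_of_lt_of_le Nat.zero_lt_one hm
  set μm : Measure (Fin m → Z) := Measure.pi fun _ : Fin m => D with hμm
  haveI : IsProbabilityMeasure μm := by rw [hμm]; infer_instance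
  -- risk bounds and measurability
  have hRD0 : ∀ h, 0 ≤ riskD ℓ D h := fun h => integral_nonneg fun z => (hℓbdd h z).1
  have hRD1 : ∀ h, riskD ℓ D h ≤ 1 := by
    intro h
    calc riskD ℓ D h ≤ ∫ _, (1:ℝ) ∂D :=
          integral_mono (integrable_of_bounded
            ((hℓmeas.comp (measurable_const.prodMk measurable_id)).aestronglyMeasurable) 1
            (fun z => abs_le.2 ⟨by linarith [(hℓbdd h z).1], (hℓbdd h z).2⟩))
            (integrable_const 1) (fun z => (hℓbdd h z).2)
      _ = 1 := by simp
  have hRS0 : ∀ (S : Fin m → Z) h, 0 ≤ riskS ℓ S h := fun S h =>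
    mul_nonneg (by positivity) (Finset.sum_nonneg fun j _ => (hℓbdd h (S j)).1)
  have hRS1 : ∀ (S : Fin m → Z) h, riskS ℓ S h ≤ 1 := by
    intro S h
    rw [riskS]
    have : ∑ j, ℓ h (S j) ≤ (m:ℝ) := by
      calc ∑ j, ℓ h (S j) ≤ ∑ _j : Fin m, (1:ℝ) :=
            Finset.sum_le_sum fun j _ => (hℓbdd h (S j)).2
        _ = (m:ℝ) := by simp
    rw [div_mul_eq_mul_div, one_mul, div_le_one hm0]
    exact this
  have mRD : Measurable (riskD ℓ D) :=
    hℓmeas.stronglyMeasurable.integral_prod_right'.measurable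
  -- the exponential deviation function
  set F : H → (Fin m → Z) → ℝ :=
    fun h S => Real.exp (lam * (riskD ℓ D h - riskS ℓ S h)) with hF
  have mF : Measurable (fun p : (Fin m → Z) × H => F p.2 p.1) := by
    apply Measurable.exp
    apply Measurable.const_mul
    apply Measurable.sub (mRD.comp measurable_snd)
    apply Measurable.const_mul
    exact Finset.measurable_sum _ fun j _ =>
      hℓmeas.comp (measurable_snd.prodMk ((measurable_pi_apply j).comp measurable_fst))
  have Fub : ∀ h S, F h S ≤ Real.exp lam := by
    intro h S
    apply Real.exp_le_exp.2
    have h1 : riskD ℓ D h - riskS ℓ S h ≤ 1 := by linarith [hRD1 h, hRS0 S h]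
    nlinarith
  have Flb : ∀ h S, Real.exp (-lam) ≤ F h S := by
    intro h S
    apply Real.exp_le_exp.2
    have h1 : -1 ≤ riskD ℓ D h - riskS ℓ S h := by linarith [hRD0 h, hRS1 S h]
    nlinarith
  have Fabs : ∀ h S, |F h S| ≤ Real.exp lam := fun h S => by
    rw [abs_of_pos (Real.exp_pos _)]; exact Fub h S
  set g : (Fin m → Z) → ℝ := fun S => ∫ h, F h S ∂P with hg
  have mg : Measurable g := mF.stronglyMeasurable.integral_prod_right'.measurable
  have hIF_S : ∀ S, Integrable (fun h => F h S) P := fun S =>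
    integrable_of_bounded
      ((mF.comp (measurable_const.prodMk measurable_id)).aestronglyMeasurable)
      (Real.exp lam) (fun h => Fabs h S)
  have gpos : ∀ S, Real.exp (-lam) ≤ g S := by
    intro S
    calc Real.exp (-lam) = ∫ _, Real.exp (-lam) ∂P := by simp
      _ ≤ ∫ h, F h S ∂P :=
        integral_mono (integrable_const _) (hIF_S S) (fun h => Flb h S)
  have gub : ∀ S, |g S| ≤ Real.exp lam := by
    intro S
    have := norm_integral_le_of_norm_le_const (μ := P) (C := Real.exp lam)
      (f := fun h => F h S) (Filter.Eventually.of_forall fun h => by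
        rw [Real.norm_eq_abs]; exact Fabs h S)
    simpa using this
  -- expectation bound
  have hinner : ∀ h : H, ∫ S, F h S ∂μm ≤ Real.exp (lam ^ 2 / (8 * m)) := by
    intro h
    set t : ℝ := -(lam / m) with ht
    set f0 : Z → ℝ := fun z => Real.exp ((lam / m) * riskD ℓ D h + t * ℓ h z) with hf0
    have hexpand : ∀ S, F h S = ∏ j : Fin m, f0 (S j) := by
      intro S
      rw [hF]
      simp only
      rw [← Real.exp_sum]
      congr 1
      rw [riskS]
      simp only [hf0, ht]
      rw [Finset.sum_add_distrib, Finset.sum_const, ← Finset.mul_sum]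
      simp only [Finset.card_univ, Fintype.card_fin, nsmul_eq_mul]
      field_simp
      ring
    have hX : Measurable (ℓ h) := hℓmeas.comp (measurable_const.prodMk measurable_id)
    have hf0bound : ∫ z, f0 z ∂D ≤ Real.exp (lam ^ 2 / (8 * m ^ 2)) := by
      have hpull : ∀ z, f0 z = Real.exp ((lam / m) * riskD ℓ D h) * Real.exp (t * ℓ h z) := by
        intro z; rw [hf0]; simp only; rw [Real.exp_add]
      calc ∫ z, f0 z ∂D = Real.exp ((lam / m) * riskD ℓ D h) * ∫ z, Real.exp (t * ℓ h z) ∂D := by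
            rw [← integral_const_mul]; exact integral_congr_ae (Filter.Eventually.of_forall hpull)
        _ ≤ Real.exp ((lam / m) * riskD ℓ D h) *
              Real.exp (t * (∫ z, ℓ h z ∂D) + t ^ 2 / 8) := by
            apply mul_le_mul_of_nonneg_left _ (Real.exp_pos _).le
            exact hoeffding_int D (ℓ h) hX (fun z => hℓbdd h z) t
        _ = Real.exp (lam ^ 2 / (8 * m ^ 2)) := by
            rw [← Real.exp_add]
            congr 1
            have : (∫ z, ℓ h z ∂D) = riskD ℓ D h := rfl
            rw [this, ht]
            field_simp
            ring
    have hf0nonneg : 0 ≤ ∫ z, f0 z ∂D := integral_nonneg fun z => (Real.exp_pos _).le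
    calc ∫ S, F h S ∂μm = ∫ S, ∏ j : Fin m, f0 (S j) ∂μm :=
          integral_congr_ae (Filter.Eventually.of_forall hexpand)
      _ = (∫ z, f0 z ∂D) ^ m := integral_pi_prod_pow D m f0
      _ ≤ (Real.exp (lam ^ 2 / (8 * m ^ 2))) ^ m := pow_le_pow_left₀ hf0nonneg hf0bound m
      _ = Real.exp (lam ^ 2 / (8 * m)) := by
          rw [← Real.exp_nat_mul]
          congr 1
          field_simp
  have hEg : ∫ S, g S ∂μm ≤ Real.exp (lam ^ 2 / (8 * m)) := by
    have hswap : ∫ S, g S ∂μm = ∫ h, ∫ S, F h S ∂μm ∂P := by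
      exact integral_integral_swap (f := fun S h => F h S)
        (integrable_of_bounded mF.aestronglyMeasurable (Real.exp lam)
          (fun p => Fabs p.2 p.1))
    rw [hswap]
    have hIinner : Integrable (fun h => ∫ S, F h S ∂μm) P := by
      apply integrable_of_bounded
        ((mF.comp measurable_swap).stronglyMeasurable.integral_prod_right'.measurable.aestronglyMeasurable)
        (Real.exp lam)
      intro h
      have := norm_integral_le_of_norm_le_const (μ := μm) (C := Real.exp lam)
        (f := fun S => F h S) (Filter.Eventually.of_forall fun S => by
          rw [Real.norm_eq_abs]; exact Fabs h S)
      simpa using this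
    calc ∫ h, ∫ S, F h S ∂μm ∂P ≤ ∫ _, Real.exp (lam ^ 2 / (8 * m)) ∂P :=
          integral_mono hIinner (integrable_const _) hinner
      _ = Real.exp (lam ^ 2 / (8 * m)) := by simp
  -- Markov
  set c : ℝ := Real.exp (lam ^ 2 / (8 * m)) / δ with hc
  have hcpos : 0 < c := div_pos (Real.exp_pos _) hδ.1
  have hIg : Integrable g μm := integrable_of_bounded mg.aestronglyMeasurable _ gub
  have hmarkov : (μm {S | c ≤ g S}).toReal ≤ δ := by
    have h1 : c * (μm {S | c ≤ g S}).toReal ≤ ∫ S, g S ∂μm :=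
      mul_meas_ge_le_integral_of_nonneg
        (Filter.Eventually.of_forall fun S => le_trans (Real.exp_pos _).le (gpos S)) hIg c
    have h2 : c * δ = Real.exp (lam ^ 2 / (8 * m)) := by
      rw [hc, div_mul_cancel₀ _ hδ.1.ne']
    have : c * (μm {S | c ≤ g S}).toReal ≤ c * δ := by
      rw [h2]; exact le_trans h1 hEg
    exact le_of_mul_le_mul_left this hcpos
  have hAmeas : MeasurableSet {S | c ≤ g S} := measurableSet_le measurable_const mg
  have hGmeasure : ENNReal.ofReal (1 - δ) ≤ μm {S | g S < c} := by
    have hcompl : {S | g S < c} = {S | c ≤ g S}ᶜ := by ext S; simp [not_le]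
    rw [hcompl, measure_compl hAmeas (measure_ne_top _ _), measure_univ]
    have hA : μm {S | c ≤ g S} ≤ ENNReal.ofReal δ :=
      (ENNReal.le_ofReal_iff_toReal_le (measure_ne_top _ _) hδ.1.le).2 hmarkov
    calc ENNReal.ofReal (1 - δ) = 1 - ENNReal.ofReal δ := by
          rw [ENNReal.ofReal_sub 1 hδ.1.le, ENNReal.ofReal_one]
      _ ≤ 1 - μm {S | c ≤ g S} := tsub_le_tsub_left hA 1
  refine le_trans hGmeasure (measure_mono ?_)
  -- the good event implies the PAC-Bayes bound
  intro S hS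
  simp only [Set.mem_setOf_eq] at hS ⊢
  intro Q hQprob
  by_cases hcase : Q ≪ P ∧ Integrable (fun x => Real.log (Q.rnDeriv P x).toReal) Q
  · rw [klDiv', if_pos hcase]
    set KLr : ℝ := ∫ x, Real.log (Q.rnDeriv P x).toReal ∂Q with hKLr
    have hlog1δ : 0 ≤ Real.log (1 / δ) :=
      Real.log_nonneg (by rw [le_div_iff₀ hδ.1]; linarith [hδ.2])
    have hKL0 : 0 ≤ KLr := by
      have := dv_easy Q P hcase.1 hcase.2 (fun _ => 0) measurable_const 0 (by simp)
      simpa using this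
    -- DV applied to f
    set f : H → ℝ := fun h => lam * (riskD ℓ D h - riskS ℓ S h) with hf
    have mRS_S : Measurable (riskS ℓ S) := by
      apply Measurable.const_mul
      exact Finset.measurable_sum _ fun j _ =>
        hℓmeas.comp (measurable_id.prodMk measurable_const)
    have mf : Measurable f := ((mRD.sub mRS_S).const_mul lam)
    have hfabs : ∀ h, |f h| ≤ lam := by
      intro h
      rw [hf, abs_mul, abs_of_pos hlam]
      have h1 : |riskD ℓ D h - riskS ℓ S h| ≤ 1 :=
        abs_le.2 ⟨by linarith [hRD0 h, hRS1 S h], by linarith [hRD1 h, hRS0 S h]⟩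
      nlinarith
    have hDV := dv_easy Q P hcase.1 hcase.2 f mf lam hfabs
    have hgSf : (∫ x, Real.exp (f x) ∂P) = g S := rfl
    rw [hgSf] at hDV
    -- integral of f over Q
    have hIRD : Integrable (riskD ℓ D) Q :=
      integrable_of_bounded mRD.aestronglyMeasurable 1
        (fun h => abs_le.2 ⟨by linarith [hRD0 h], hRD1 h⟩)
    have hIRS : Integrable (riskS ℓ S) Q :=
      integrable_of_bounded mRS_S.aestronglyMeasurable 1
        (fun h => abs_le.2 ⟨by linarith [hRS0 S h], hRS1 S h⟩)
    have hIf : ∫ x, f x ∂Q = lam * (riskDQ ℓ D Q - riskSQ ℓ S Q) := by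
      rw [hf]
      rw [integral_const_mul, integral_sub hIRD hIRS]
      rfl
    rw [hIf] at hDV
    -- bound log (g S)
    have hloggS : Real.log (g S) ≤ lam ^ 2 / (8 * m) + Real.log (1 / δ) := by
      have h1 : Real.log (g S) ≤ Real.log c :=
        Real.log_le_log (lt_of_lt_of_le (Real.exp_pos _) (gpos S)) hS.le
      have h2 : Real.log c = lam ^ 2 / (8 * m) + Real.log (1 / δ) := by
        rw [hc, Real.log_div (Real.exp_ne_zero _) hδ.1.ne', Real.log_exp,
          Real.log_div one_ne_zero hδ.1.ne', Real.log_one]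
        ring
      linarith
    -- the real inequality
    have hreal : riskDQ ℓ D Q ≤ riskSQ ℓ S Q + (KLr + Real.log (1 / δ)) / lam
        + lam / (8 * m) := by
      have hmul : lam * ((KLr + Real.log (1 / δ)) / lam) = KLr + Real.log (1 / δ) := by
        field_simp
      have h3 : lam * (riskDQ ℓ D Q - riskSQ ℓ S Q)
          ≤ KLr + Real.log (1 / δ) + lam ^ 2 / (8 * m) := by linarith
      have h4 : lam * (lam / (8 * m)) = lam ^ 2 / (8 * m) := by ring
      have h5 : lam * riskDQ ℓ D Q ≤ lam * (riskSQ ℓ S Q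
          + (KLr + Real.log (1 / δ)) / lam + lam / (8 * m)) := by
        rw [mul_add, mul_add, hmul, h4]
        linarith
      exact le_of_mul_le_mul_left h5 hlam
    -- nonnegativity
    have hriskSQ0 : 0 ≤ riskSQ ℓ S Q := integral_nonneg fun h => hRS0 S h
    have hsum0 : 0 ≤ (KLr + Real.log (1 / δ)) / lam :=
      div_nonneg (by linarith) hlam.le
    have hlm0 : 0 ≤ lam / (8 * m) := by positivity
    calc ENNReal.ofReal (riskDQ ℓ D Q)
        ≤ ENNReal.ofReal (riskSQ ℓ S Q + (KLr + Real.log (1 / δ)) / lam + lam / (8 * m)) :=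
          ENNReal.ofReal_le_ofReal hreal
      _ = ENNReal.ofReal (riskSQ ℓ S Q) +
            (ENNReal.ofReal KLr + ENNReal.ofReal (Real.log (1 / δ))) / ENNReal.ofReal lam +
            ENNReal.ofReal (lam / (8 * m)) := by
          rw [ENNReal.ofReal_add (by linarith) hlm0,
            ENNReal.ofReal_add hriskSQ0 hsum0,
            ENNReal.ofReal_div_of_pos hlam,
            ENNReal.ofReal_add hKL0 hlog1δ]
  · rw [klDiv', if_neg hcase]
    have h1 : (⊤ + ENNReal.ofReal (Real.log (1 / δ))) / ENNReal.ofReal lam = ⊤ := by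
      rw [top_add, ENNReal.top_div_of_ne_top ENNReal.ofReal_ne_top]
    rw [h1]
    simp
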